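/- Atoms of maximal sequence-length: Let G = (V,E,r) be a connected graph with at least two vertices, and for a ∈ A(G) let ℓ(a) = Σ_{v ∈ V} deg(v)·a_V(v) − Σ_{e ∈ E} a_E(e). An atom a of A(G) satisfies ℓ(a) = 2|E| − |V| + 1 if and only if the support of a is a tree (i.e., |E_a| = |V_a| − 1, the support of an atom being connected) that contains every vertex of G of degree at least 2 (i.e., a_V v = 1 for every v with deg(v) ≥ 2). In particular, the indicator of any spanning tree of G is an atom of maximal sequence-length. -/

import Mathlib

/-- An agglomeration on the graph given by `r : E → Sym2 V`. -/
def IsAgg {V E : Type*} (r : E → Sym2 V) (a : (V → ℕ) × (E → ℕ)) : Prop :=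
  ∀ (e : E) (v : V), v ∈ r e → a.2 e ≤ a.1 v

/-- An atom of the monoid of agglomerations. -/
def IsAtomAgg {V E : Type*} (r : E → Sym2 V) (a : (V → ℕ) × (E → ℕ)) : Prop :=
  IsAgg r a ∧ a ≠ 0 ∧
    ∀ b c : (V → ℕ) × (E → ℕ), IsAgg r b → IsAgg r c → a = b + c → b = 0 ∨ c = 0

/-- `AggJoined r E' x y`: `x` and `y` are joined by a walk using only edges in `E'`. -/
def AggJoined {V E : Type*} (r : E → Sym2 V) (E' : Set E) : V → V → Prop :=
  Relation.ReflTransGen (fun x y => ∃ e ∈ E', r e = s(x, y))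

section Aux

lemma natcard_eq_filter {α : Type*} [Fintype α] (p : α → Prop) [DecidablePred p] :
    Nat.card {x : α // p x} = (Finset.univ.filter p).card := by
  rw [Nat.card_eq_fintype_card, Fintype.card_subtype]

lemma natcard_eq_sum_ite {α : Type*} [Fintype α] (p : α → Prop) [DecidablePred p] :
    Nat.card {x : α // p x} = ∑ x : α, if p x then 1 else 0 := by
  rw [natcard_eq_filter, Finset.card_filter]

lemma sym2_rep {V : Type*} (z : Sym2 V) : ∃ x y, z = s(x, y) := by
  induction z using Sym2.ind with | _ x y => exact ⟨x, y, rfl⟩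

lemma mem_card_two {V E : Type*} [Fintype V] [DecidableEq V] (r : E → Sym2 V)
    (hr : ∀ e : E, ¬ (r e).IsDiag) (e : E) : Nat.card {v : V // v ∈ r e} = 2 := by
  have hd := hr e
  rw [natcard_eq_filter]
  obtain ⟨x, y, h⟩ : ∃ x y, r e = s(x,y) := sym2_rep (r e)
  rw [h] at hd
  have hxy : x ≠ y := fun hh => hd (by simp [hh])
  have : Finset.univ.filter (fun v => v ∈ r e) = {x, y} := by
    ext v; simp [h, Sym2.mem_iff]
  rw [this, Finset.card_insert_of_notMem (by simp [hxy]), Finset.card_singleton]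

lemma handshake {V E : Type*} [Fintype V] [Fintype E] [DecidableEq V] (r : E → Sym2 V)
    (hr : ∀ e : E, ¬ (r e).IsDiag) :
    ∑ v : V, Nat.card {e : E // v ∈ r e} = 2 * Fintype.card E := by
  have h1 : ∀ v : V, Nat.card {e : E // v ∈ r e} = ∑ e : E, if v ∈ r e then 1 else 0 :=
    fun v => natcard_eq_sum_ite _
  rw [Finset.sum_congr rfl fun v _ => h1 v, Finset.sum_comm]
  have h2 : ∀ e : E, (∑ v : V, if v ∈ r e then 1 else 0) = 2 := by
    intro e
    rw [← natcard_eq_sum_ite]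
    exact mem_card_two r hr e
  rw [Finset.sum_congr rfl fun e _ => h2 e]
  simp [Finset.card_univ, mul_comm]

lemma aggjoined_symm {V E : Type*} (r : E → Sym2 V) (E' : Set E) :
    Symmetric (AggJoined r E') := by
  refine fun x y h => (@Relation.ReflTransGen.symmetric V (fun x y => ∃ e ∈ E', r e = s(x, y)) ⟨?_⟩).symm x y h
  rintro x y ⟨e, he, hre⟩
  exact ⟨e, he, by rw [hre, Sym2.eq_swap]⟩

lemma aggjoined_trans {V E : Type*} {r : E → Sym2 V} {E' : Set E} {x y z : V}
    (h1 : AggJoined r E' x y) (h2 : AggJoined r E' y z) : AggJoined r E' x z :=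
  Relation.ReflTransGen.trans h1 h2

lemma crossing {V E : Type*} (r : E → Sym2 V) (E' : Set E) (P : V → Prop) {v w : V}
    (h : AggJoined r E' v w) :
    P v → ¬ P w → ∃ x y e, e ∈ E' ∧ r e = s(x, y) ∧ P x ∧ ¬ P y := by
  induction h with
  | refl => exact fun h1 h2 => absurd h1 h2
  | @tail b c hab hbc ih =>
    intro h1 h2
    by_cases hPb : P b
    · obtain ⟨e, he, hre⟩ := hbc
      exact ⟨b, c, e, he, hre, hPb, h2⟩
    · exact ih h1 hPb

lemma exists_pos_vertex {V E : Type*} (r : E → Sym2 V) (b : (V → ℕ) × (E → ℕ))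
    (hb : IsAgg r b) (hne : b ≠ 0) : ∃ v, 0 < b.1 v := by
  by_contra h
  push_neg at h
  simp only [Nat.le_zero] at h
  apply hne
  have he : ∀ e, b.2 e = 0 := by
    intro e
    obtain ⟨x, y, hxy⟩ := sym2_rep (r e)
    have h1 := hb e x (by rw [hxy]; simp)
    have h2 := h x
    omega
  ext z
  · simp [h z]
  · simp [he z]

open Classical in
lemma atom_structure {V E : Type*} (r : E → Sym2 V) (a : (V → ℕ) × (E → ℕ))
    (ha : IsAtomAgg r a) :
    (∀ v, a.1 v ≤ 1) ∧ (∀ e, a.2 e ≤ 1) ∧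
      (∀ x y, 0 < a.1 x → 0 < a.1 y → AggJoined r {e | 0 < a.2 e} x y) := by
  obtain ⟨hagg, hne, hatom⟩ := ha
  obtain ⟨x0, hx0⟩ := exists_pos_vertex r a hagg hne
  set Ea : Set E := {e | 0 < a.2 e} with hEa
  set R : V → Prop := fun v => AggJoined r Ea x0 v with hR
  have hstep : ∀ e, 0 < a.2 e → ∀ v ∈ r e, R v → ∀ w ∈ r e, R w := by
    intro e hepos v hv hRv w hw
    obtain ⟨x, y, hxy⟩ := sym2_rep (r e)
    have hxR : R x → R y := fun h => h.tail ⟨e, hepos, hxy⟩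
    have hyR : R y → R x := fun h => h.tail ⟨e, hepos, by rw [hxy, Sym2.eq_swap]⟩
    rw [hxy, Sym2.mem_iff] at hv hw
    rcases hv with rfl | rfl <;> rcases hw with rfl | rfl <;> tauto
  let bV : V → ℕ := fun v => if 0 < a.1 v ∧ R v then 1 else 0
  let bE : E → ℕ := fun e => if 0 < a.2 e ∧ ∀ v ∈ r e, R v then 1 else 0
  have hbV1 : ∀ v, 0 < a.1 v → R v → bV v = 1 := fun v h1 h2 => if_pos ⟨h1, h2⟩
  have hbV0 : ∀ v, ¬(0 < a.1 v ∧ R v) → bV v = 0 := fun v h => if_neg h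
  have hbVle : ∀ v, bV v ≤ a.1 v := by
    intro v
    by_cases h : 0 < a.1 v ∧ R v
    · rw [hbV1 v h.1 h.2]; omega
    · rw [hbV0 v h]; omega
  have hbE1 : ∀ e, (0 < a.2 e ∧ ∀ v ∈ r e, R v) → bE e = 1 := fun e h => if_pos h
  have hbE0 : ∀ e, ¬(0 < a.2 e ∧ ∀ v ∈ r e, R v) → bE e = 0 := fun e h => if_neg h
  have hbEle : ∀ e, bE e ≤ a.2 e := by
    intro e
    by_cases h : 0 < a.2 e ∧ ∀ v ∈ r e, R v
    · rw [hbE1 e h]; omega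
    · rw [hbE0 e h]; omega
  have hbagg : IsAgg r (bV, bE) := by
    intro e v hv
    show bE e ≤ bV v
    by_cases h : 0 < a.2 e ∧ ∀ w ∈ r e, R w
    · rw [hbE1 e h, hbV1 v (lt_of_lt_of_le h.1 (hagg e v hv)) (h.2 v hv)]
    · rw [hbE0 e h]; omega
  have hcagg : IsAgg r (fun v => a.1 v - bV v, fun e => a.2 e - bE e) := by
    intro e v hv
    show a.2 e - bE e ≤ a.1 v - bV v
    have hle := hagg e v hv
    by_cases h : 0 < a.2 e ∧ ∀ w ∈ r e, R w
    · rw [hbE1 e h, hbV1 v (lt_of_lt_of_le h.1 hle) (h.2 v hv)]; omega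
    · rw [hbE0 e h]
      by_cases hbv : 0 < a.1 v ∧ R v
      · have ha2 : a.2 e = 0 := by
          by_contra hcon
          exact h ⟨Nat.pos_of_ne_zero hcon, hstep e (Nat.pos_of_ne_zero hcon) v hv hbv.2⟩
        omega
      · rw [hbV0 v hbv]; omega
  have hsum : a = (bV, bE) + (fun v => a.1 v - bV v, fun e => a.2 e - bE e) := by
    ext z
    · show a.1 z = bV z + (a.1 z - bV z)
      have := hbVle z; omega
    · show a.2 z = bE z + (a.2 z - bE z)
      have := hbEle z; omega
  rcases hatom _ _ hbagg hcagg hsum with hb0 | hc0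
  · exfalso
    have hRx0 : R x0 := Relation.ReflTransGen.refl
    have h1 : bV x0 = 1 := hbV1 x0 hx0 hRx0
    have h0 : bV x0 = 0 := congrFun (congrArg Prod.fst hb0) x0
    omega
  · have h1eq : ∀ v, a.1 v = bV v := by
      intro v
      have h0 : a.1 v - bV v = 0 := congrFun (congrArg Prod.fst hc0) v
      have := hbVle v; omega
    have h2eq : ∀ e, a.2 e = bE e := by
      intro e
      have h0 : a.2 e - bE e = 0 := congrFun (congrArg Prod.snd hc0) e
      have := hbEle e; omega
    refine ⟨fun v => ?_, fun e => ?_, fun x y hx hy => ?_⟩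
    · rw [h1eq v]
      by_cases h : 0 < a.1 v ∧ R v
      · rw [hbV1 v h.1 h.2]
      · rw [hbV0 v h]; omega
    · rw [h2eq e]
      by_cases h : 0 < a.2 e ∧ ∀ w ∈ r e, R w
      · rw [hbE1 e h]
      · rw [hbE0 e h]; omega
    · have hRx : R x := by
        by_contra hcon
        rw [h1eq x, hbV0 x (fun h => hcon h.2)] at hx
        omega
      have hRy : R y := by
        by_contra hcon
        rw [h1eq y, hbV0 y (fun h => hcon h.2)] at hy
        omega
      exact aggjoined_trans (aggjoined_symm r Ea hRx) hRy

lemma card_le_card_edges {V E : Type*} [Fintype V] [Fintype E] (r : E → Sym2 V)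
    (hr : ∀ e : E, ¬ (r e).IsDiag) (V' : Set V) (E' : Set E) (v0 : V) (hv0 : v0 ∈ V')
    (hjoin : ∀ x ∈ V', AggJoined r E' v0 x) :
    Nat.card ↥V' ≤ Nat.card ↥E' + 1 := by
  classical
  let G : SimpleGraph V :=
    { Adj := fun x y => x ≠ y ∧ ∃ e ∈ E', r e = s(x, y)
      symm := ⟨by
        rintro x y ⟨hne, e, he, hre⟩
        exact ⟨hne.symm, e, he, by rw [hre, Sym2.eq_swap]⟩⟩
      loopless := ⟨fun x h => h.1 rfl⟩ }
  have hreach : ∀ x ∈ V', G.Reachable v0 x := by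
    intro x hx
    rw [SimpleGraph.reachable_iff_reflTransGen]
    refine Relation.ReflTransGen.mono ?_ _ _ (hjoin x hx)
    rintro u w ⟨e, he, hre⟩
    refine ⟨fun huw => hr e ?_, e, he, hre⟩
    rw [hre, Sym2.mk_isDiag_iff]
    exact huw
  have key : ∀ x : V, x ∈ V' → x ≠ v0 →
      ∃ e, e ∈ E' ∧ ∃ y, r e = s(x, y) ∧ G.dist v0 y < G.dist v0 x := by
    intro x hx hne
    have hre := hreach x hx
    have hpos : 0 < G.dist v0 x := hre.pos_dist_of_ne (Ne.symm hne)
    obtain ⟨p, hp⟩ := hre.exists_walk_length_eq_dist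
    obtain ⟨y, hadj, q, hq⟩ := (p.reverse).exists_eq_cons_of_ne hne
    obtain ⟨hne', e, he, hre'⟩ := hadj
    refine ⟨e, he, y, hre', ?_⟩
    have hlen : q.length + 1 = G.dist v0 x := by
      have := congrArg SimpleGraph.Walk.length hq
      rw [SimpleGraph.Walk.length_reverse, hp] at this
      simp only [SimpleGraph.Walk.length_cons] at this
      omega
    have hdle : G.dist v0 y ≤ q.length := by
      rw [SimpleGraph.dist_comm]
      exact SimpleGraph.dist_le q
    omega
  let f : ↥(V' \ {v0} : Set V) → ↥E' := fun x =>
    ⟨(key x.1 x.2.1 x.2.2).choose, (key x.1 x.2.1 x.2.2).choose_spec.1⟩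
  have hf : Function.Injective f := by
    rintro ⟨x, hx⟩ ⟨y, hy⟩ hxy
    obtain ⟨x', hrx, hdx⟩ := (key x hx.1 hx.2).choose_spec.2
    obtain ⟨y', hry, hdy⟩ := (key y hy.1 hy.2).choose_spec.2
    have heq : (key x hx.1 hx.2).choose = (key y hy.1 hy.2).choose :=
      congrArg Subtype.val hxy
    rw [heq, hry] at hrx
    rw [Sym2.eq_iff] at hrx
    ext
    rcases hrx with ⟨h1, h2⟩ | ⟨h1, h2⟩
    · exact h1.symm
    · exfalso
      subst h1 h2
      omega
  have h1 : Nat.card ↥(V' \ {v0} : Set V) ≤ Nat.card ↥E' :=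
    Nat.card_le_card_of_injective f hf
  have h2 : (V' \ {v0}).ncard + 1 = V'.ncard :=
    Set.ncard_diff_singleton_add_one hv0 (Set.toFinite V')
  rw [Nat.card_coe_set_eq] at h1 ⊢
  omega

lemma indicator_is_atom {V E : Type*} (r : E → Sym2 V) (E' : Set E)
    (hconn' : ∀ x y : V, AggJoined r E' x y) (hV : Nonempty V) :
    IsAtomAgg r (fun _ : V => 1, E'.indicator 1) := by
  classical
  refine ⟨?_, ?_, ?_⟩
  · intro e v _
    show E'.indicator 1 e ≤ 1
    by_cases h : e ∈ E' <;> simp [h]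
  · intro h
    obtain ⟨v⟩ := hV
    have := congrFun (congrArg Prod.fst h) v
    simp at this
  · intro b c hb hc heq
    have hsum1 : ∀ v, b.1 v + c.1 v = 1 := by
      intro v
      exact (congrFun (congrArg Prod.fst heq) v).symm
    have hsum2 : ∀ e, b.2 e + c.2 e = E'.indicator 1 e := by
      intro e
      exact (congrFun (congrArg Prod.snd heq) e).symm
    by_contra hcon
    push_neg at hcon
    obtain ⟨hb0, hc0⟩ := hcon
    obtain ⟨v, hv⟩ := exists_pos_vertex r b hb hb0
    obtain ⟨w, hw⟩ := exists_pos_vertex r c hc hc0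
    have hwn : ¬ 0 < b.1 w := by have := hsum1 w; omega
    obtain ⟨x, y, e, he, hre, hPx, hPy⟩ :=
      crossing r E' (fun z => 0 < b.1 z) (hconn' v w) hv hwn
    have hind : E'.indicator 1 e = 1 := by simp [Set.indicator_of_mem he]
    have hxe : x ∈ r e := by rw [hre]; simp
    have hye : y ∈ r e := by rw [hre]; simp
    have h1 := hb e y hye
    have h2 := hc e x hxe
    have h3 := hsum1 x
    have h4 := hsum1 y
    have h5 := hsum2 e
    omega

lemma deg_pos {V E : Type*} [Fintype V] [Fintype E] (r : E → Sym2 V)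
    (hconn : ∀ x y : V, AggJoined r Set.univ x y) (hV : 2 ≤ Fintype.card V) (v : V) :
    0 < Nat.card {e : E // v ∈ r e} := by
  obtain ⟨w, hw⟩ := Fintype.exists_ne_of_one_lt_card (by omega) v
  rcases Relation.ReflTransGen.cases_head (hconn v w) with heq | ⟨b, ⟨e, _, hre⟩, _⟩
  · exact absurd heq.symm hw
  · have hv : v ∈ r e := by rw [hre]; simp
    have : Nonempty {e : E // v ∈ r e} := ⟨⟨e, hv⟩⟩
    exact Nat.card_pos

end Aux

/-- **Atoms of maximal sequence-length**: for a connected graph `G` with at least two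
vertices, an atom `a` of `A(G)` satisfies `ℓ(a) = 2|E| − |V| + 1` if and only if the
support of `a` is a tree containing every vertex of degree at least `2`.  In particular,
the indicator of any spanning tree is an atom of maximal sequence-length. -/
theorem davenport_extremal_atoms {V E : Type*} [Fintype V] [Fintype E]
    (r : E → Sym2 V) (hr : ∀ e : E, ¬ (r e).IsDiag)
    (hconn : ∀ x y : V, AggJoined r Set.univ x y)
    (hV : 2 ≤ Fintype.card V) :
    (∀ a : (V → ℕ) × (E → ℕ), IsAtomAgg r a →
      ((∑ v : V, (Nat.card {e : E // v ∈ r e} : ℤ) * a.1 v) - ∑ e : E, (a.2 e : ℤ)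
          = 2 * (Fintype.card E : ℤ) - (Fintype.card V : ℤ) + 1 ↔
        (Nat.card {e : E // 0 < a.2 e} + 1 = Nat.card {v : V // 0 < a.1 v} ∧
         ∀ v : V, 2 ≤ Nat.card {e : E // v ∈ r e} → a.1 v = 1))) ∧
    (∀ E' : Set E, Nat.card ↥E' + 1 = Fintype.card V →
      (∀ x y : V, AggJoined r E' x y) →
      IsAtomAgg r (fun _ : V => 1, E'.indicator 1) ∧
      (∑ v : V, (Nat.card {e : E // v ∈ r e} : ℤ) * (1 : ℕ))
          - ∑ e : E, ((E'.indicator 1 e : ℕ) : ℤ)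
        = 2 * (Fintype.card E : ℤ) - (Fintype.card V : ℤ) + 1) := by
  classical
  have hdeg : ∀ v : V, 0 < Nat.card {e : E // v ∈ r e} := deg_pos r hconn hV
  have hhs : ∑ v : V, Nat.card {e : E // v ∈ r e} = 2 * Fintype.card E := handshake r hr
  constructor
  · -- part 1
    intro a ha
    obtain ⟨h1le, h2le, hconn'⟩ := atom_structure r a ha
    obtain ⟨v0, hv0⟩ := exists_pos_vertex r a ha.1 ha.2.1
    set F : Finset V := Finset.univ.filter (fun v => 0 < a.1 v) with hF
    set Fc : Finset V := Finset.univ.filter (fun v => ¬ 0 < a.1 v) with hFc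
    have hnV : Nat.card {v : V // 0 < a.1 v} = F.card := natcard_eq_filter _
    have hnE : Nat.card {e : E // 0 < a.2 e}
        = (Finset.univ.filter (fun e => 0 < a.2 e)).card := natcard_eq_filter _
    set nE' : ℕ := (Finset.univ.filter (fun e => 0 < a.2 e)).card with hnE'
    have hsplitc : F.card + Fc.card = Fintype.card V := by
      rw [hF, hFc, ← Finset.card_univ]
      exact Finset.card_filter_add_card_filter_not _
    -- vertex sum
    have hsumv : ∑ v : V, (Nat.card {e : E // v ∈ r e} : ℤ) * a.1 v
        = ((∑ v ∈ F, Nat.card {e : E // v ∈ r e} : ℕ) : ℤ) := by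
      push_cast
      rw [hF, Finset.sum_filter]
      refine Finset.sum_congr rfl fun v _ => ?_
      by_cases h : 0 < a.1 v
      · have h1 : a.1 v = 1 := le_antisymm (h1le v) h
        simp [h, h1]
      · have h0 : a.1 v = 0 := by omega
        simp [h, h0]
    -- edge sum
    have hsume : ∑ e : E, (a.2 e : ℤ) = (nE' : ℤ) := by
      rw [hnE', Finset.card_filter]
      push_cast
      refine Finset.sum_congr rfl fun e _ => ?_
      have := h2le e
      by_cases h : 0 < a.2 e
      · have h1 : a.2 e = 1 := by omega
        simp [h, h1]
      · have h0 : a.2 e = 0 := by omega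
        simp [h, h0]
    set A : ℕ := ∑ v ∈ F, Nat.card {e : E // v ∈ r e} with hA
    set B : ℕ := ∑ v ∈ Fc, Nat.card {e : E // v ∈ r e} with hB
    have hAB : A + B = 2 * Fintype.card E := by
      rw [hA, hB, hF, hFc, ← hhs]
      exact Finset.sum_filter_add_sum_filter_not _ _ _
    have hBlb : Fc.card ≤ B := by
      rw [hB, Finset.card_eq_sum_ones]
      exact Finset.sum_le_sum fun v _ => hdeg v
    have hElb : F.card ≤ nE' + 1 := by
      have h3 : Nat.card {v : V // 0 < a.1 v} ≤ Nat.card {e : E // 0 < a.2 e} + 1 :=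
        card_le_card_edges r hr {v | 0 < a.1 v} {e | 0 < a.2 e} v0 hv0
          (fun x hx => hconn' v0 x hv0 hx)
      rw [hnV, hnE] at h3
      exact h3
    rw [hsumv, hsume, hnV, hnE]
    constructor
    · intro heq
      have hkey : B = Fc.card ∧ nE' + 1 = F.card := by
        constructor <;> omega
      refine ⟨hkey.2, fun v hdv => ?_⟩
      by_contra hcon
      have hv0' : a.1 v = 0 := by have := h1le v; omega
      have hvFc : v ∈ Fc := by rw [hFc]; simp [hv0']
      have hlt : ∑ v ∈ Fc, 1 < ∑ v ∈ Fc, Nat.card {e : E // v ∈ r e} :=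
        Finset.sum_lt_sum (fun i _ => hdeg i) ⟨v, hvFc, by omega⟩
      rw [← Finset.card_eq_sum_ones] at hlt
      omega
    · rintro ⟨hc1, hc2⟩
      have hBeq : B = Fc.card := by
        rw [hB, Finset.card_eq_sum_ones]
        refine Finset.sum_congr rfl fun v hvFc => ?_
        rw [hFc] at hvFc
        simp only [Finset.mem_filter] at hvFc
        have hv0' : a.1 v ≠ 1 := by omega
        have : ¬ 2 ≤ Nat.card {e : E // v ∈ r e} := fun h => hv0' (hc2 v h)
        have := hdeg v
        omega
      omega
  · -- part 2
    intro E' hcard hconn'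
    have hne : Nonempty V := Fintype.card_pos_iff.mp (by omega)
    refine ⟨indicator_is_atom r E' hconn' hne, ?_⟩
    have h1 : ∑ v : V, (Nat.card {e : E // v ∈ r e} : ℤ) * ((1 : ℕ) : ℤ)
        = ((2 * Fintype.card E : ℕ) : ℤ) := by
      rw [← hhs]
      push_cast
      simp
    have h2 : ∑ e : E, ((E'.indicator 1 e : ℕ) : ℤ) = ((Nat.card ↥E' : ℕ) : ℤ) := by
      have : Nat.card ↥E' = (Finset.univ.filter (fun e => e ∈ E')).card :=
        natcard_eq_filter _
      rw [this, Finset.card_filter]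
      push_cast
      refine Finset.sum_congr rfl fun e _ => ?_
      by_cases h : e ∈ E' <;> simp [h, Set.indicator_of_mem, Set.indicator_of_notMem]
    rw [h1, h2]
    push_cast
    omega
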